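/- Let D ⊆ ℝⁿ be open and convex, and let f : D → ℝⁿ be continuously differentiable such that for every x ∈ D the transpose of the Jacobian of f at x is a compartmental matrix, i.e., ∂f_i/∂x_j(x) ≥ 0 for all i ≠ j and Σ_{i=1}^n ∂f_i/∂x_j(x) ≤ 0 for all j. Then for all x, x̃ ∈ D, Σ_{i=1}^n sgn(x_i − x̃_i)·(f_i(x) − f_i(x̃)) ≤ 0, where sgn denotes the sign function with sgn(0) = 0. -/

import Mathlib

open Matrix

private lemma sign_mul_self' (x : ℝ) : Real.sign x * x = |x| := by
  rcases lt_trichotomy x 0 with h | h | h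
  · rw [Real.sign_of_neg h, abs_of_neg h]; ring
  · simp [h]
  · rw [Real.sign_of_pos h, abs_of_pos h]; ring

private lemma abs_sign_le' (x : ℝ) : |Real.sign x| ≤ 1 := by
  rcases lt_trichotomy x 0 with h | h | h
  · simp [Real.sign_of_neg h]
  · simp [h]
  · simp [Real.sign_of_pos h]

private lemma key_ineq {n : ℕ} (d : Fin n → ℝ) (A : Fin n → Fin n → ℝ)
    (hM : ∀ i j, i ≠ j → 0 ≤ A i j) (hc : ∀ j, ∑ i, A i j ≤ 0) :
    ∑ i, Real.sign (d i) * ∑ j, d j * A i j ≤ 0 := by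
  have h1 : ∑ i, Real.sign (d i) * ∑ j, d j * A i j
      = ∑ j, ∑ i, Real.sign (d i) * (d j * A i j) := by
    rw [Finset.sum_comm]
    exact Finset.sum_congr rfl fun i _ => Finset.mul_sum _ _ _
  rw [h1]
  have h2 : ∀ j, ∑ i, Real.sign (d i) * (d j * A i j) ≤ |d j| * ∑ i, A i j := by
    intro j
    rw [Finset.mul_sum]
    refine Finset.sum_le_sum fun i _ => ?_
    by_cases hij : i = j
    · subst hij
      refine le_of_eq ?_
      calc Real.sign (d i) * (d i * A i i) = (Real.sign (d i) * d i) * A i i := by ring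
        _ = |d i| * A i i := by rw [sign_mul_self']
    · have hA := hM i j hij
      calc Real.sign (d i) * (d j * A i j) = (Real.sign (d i) * d j) * A i j := by ring
        _ ≤ |d j| * A i j := by
            refine mul_le_mul_of_nonneg_right ?_ hA
            calc Real.sign (d i) * d j ≤ |Real.sign (d i) * d j| := le_abs_self _
              _ = |Real.sign (d i)| * |d j| := abs_mul _ _
              _ ≤ 1 * |d j| := mul_le_mul_of_nonneg_right (abs_sign_le' _) (abs_nonneg _)
              _ = |d j| := one_mul _
  calc ∑ j, ∑ i, Real.sign (d i) * (d j * A i j) ≤ ∑ j, |d j| * ∑ i, A i j :=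
        Finset.sum_le_sum fun j _ => h2 j
    _ ≤ 0 := Finset.sum_nonpos fun j _ =>
        mul_nonpos_of_nonneg_of_nonpos (abs_nonneg _) (hc j)

/-- If `f : D → ℝⁿ` is continuously differentiable on an open convex set `D` and
the transpose of its Jacobian is a compartmental matrix everywhere on `D`
(`∂f_i/∂x_j ≥ 0` for `i ≠ j` and `Σ_i ∂f_i/∂x_j ≤ 0` for all `j`), then
`Σ_i sgn(x_i − x̃_i)·(f_i(x) − f_i(x̃)) ≤ 0` for all `x, x̃ ∈ D`. -/
theorem monotone_flow_l1_dissipativity {n : ℕ}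
    (D : Set (Fin n → ℝ)) (hDopen : IsOpen D) (hDconv : Convex ℝ D)
    (f : (Fin n → ℝ) → (Fin n → ℝ))
    (hf : ContDiffOn ℝ 1 f D)
    (hMetzler : ∀ x ∈ D, ∀ i j, i ≠ j → 0 ≤ fderiv ℝ f x (Pi.single j 1) i)
    (hcol : ∀ x ∈ D, ∀ j, ∑ i, fderiv ℝ f x (Pi.single j 1) i ≤ 0)
    (x y : Fin n → ℝ) (hx : x ∈ D) (hy : y ∈ D) :
    ∑ i, Real.sign (x i - y i) * (f x i - f y i) ≤ 0 := by
  set d : Fin n → ℝ := x - y with hd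
  set γ : ℝ → (Fin n → ℝ) := fun t => y + t • d with hγ
  have hγmem : ∀ t ∈ Set.Icc (0:ℝ) 1, γ t ∈ D := by
    intro t ht
    exact hDconv.add_smul_sub_mem hy hx ht
  have hdiffD : DifferentiableOn ℝ f D := hf.differentiableOn one_ne_zero
  have hfd : ∀ t ∈ Set.Icc (0:ℝ) 1, DifferentiableAt ℝ f (γ t) := fun t ht =>
    hdiffD.differentiableAt (hDopen.mem_nhds (hγmem t ht))
  -- decomposition of the derivative in coordinates
  have hdecomp : ∀ z : Fin n → ℝ, fderiv ℝ f z d = ∑ j, d j • fderiv ℝ f z (Pi.single j 1) := by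
    intro z
    have hde : d = ∑ j, d j • (Pi.single j 1 : Fin n → ℝ) := by
      funext k
      simp [Finset.sum_apply, Pi.single_apply]
    conv_lhs => rw [hde]
    rw [map_sum]
    exact Finset.sum_congr rfl fun j _ => (fderiv ℝ f z).map_smul _ _
  set c : Fin n → ℝ := fun i => Real.sign (d i) with hc'
  set φ : ℝ → ℝ := fun t => ∑ i, c i * f (γ t) i with hφ
  have hderivφ : ∀ t ∈ Set.Icc (0:ℝ) 1,
      HasDerivAt φ (∑ i, c i * (fderiv ℝ f (γ t) d i)) t := by
    intro t ht
    have hγd : HasDerivAt γ d t := by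
      have h1 : HasDerivAt (fun s : ℝ => s • d) ((1:ℝ) • d) t :=
        (hasDerivAt_id t).smul_const d
      simpa only [one_smul] using h1.const_add y
    have hcomp : HasDerivAt (fun s => f (γ s)) (fderiv ℝ f (γ t) d) t :=
      ((hfd t ht).hasFDerivAt).comp_hasDerivAt t hγd
    have hcoord : ∀ i, HasDerivAt (fun s => f (γ s) i) (fderiv ℝ f (γ t) d i) t := by
      intro i
      exact (ContinuousLinearMap.proj i (R := ℝ) (φ := fun _ : Fin n => ℝ)).hasFDerivAt.comp_hasDerivAt t hcomp
    exact HasDerivAt.fun_sum fun i _ => (hcoord i).const_mul (c i)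
  have hnonpos : ∀ t ∈ Set.Icc (0:ℝ) 1, ∑ i, c i * (fderiv ℝ f (γ t) d i) ≤ 0 := by
    intro t ht
    have hz := hγmem t ht
    have : ∑ i, c i * (fderiv ℝ f (γ t) d i)
        = ∑ i, Real.sign (d i) * ∑ j, d j * fderiv ℝ f (γ t) (Pi.single j 1) i := by
      refine Finset.sum_congr rfl fun i _ => ?_
      rw [hdecomp (γ t)]
      simp [Finset.sum_apply, hc']
    rw [this]
    exact key_ineq d (fun i j => fderiv ℝ f (γ t) (Pi.single j 1) i)
      (fun i j hij => hMetzler _ hz i j hij) (fun j => hcol _ hz j)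
  have hAnti : AntitoneOn φ (Set.Icc (0:ℝ) 1) := by
    have hIntSub : interior (Set.Icc (0:ℝ) 1) ⊆ Set.Icc (0:ℝ) 1 := interior_subset
    refine antitoneOn_of_deriv_nonpos (convex_Icc 0 1) ?_ ?_ ?_
    · intro t ht
      exact ((hderivφ t ht).continuousAt).continuousWithinAt
    · intro t ht
      exact ((hderivφ t (hIntSub ht)).differentiableAt).differentiableWithinAt
    · intro t ht
      rw [(hderivφ t (hIntSub ht)).deriv]
      exact hnonpos t (hIntSub ht)
  have h01 : φ 1 ≤ φ 0 :=
    hAnti (Set.mem_Icc.mpr ⟨le_refl 0, zero_le_one⟩)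
      (Set.mem_Icc.mpr ⟨zero_le_one, le_refl 1⟩) zero_le_one
  have hγ0 : γ 0 = y := by simp [hγ]
  have hγ1 : γ 1 = x := by
    funext k; simp [hγ, hd]
  have e1 : φ 1 = ∑ i, c i * f x i := by simp only [hφ, hγ1]
  have e0 : φ 0 = ∑ i, c i * f y i := by simp only [hφ, hγ0]
  have hgoal : ∑ i, Real.sign (x i - y i) * (f x i - f y i) = φ 1 - φ 0 := by
    rw [e1, e0, ← Finset.sum_sub_distrib]
    refine Finset.sum_congr rfl fun i _ => ?_
    have : d i = x i - y i := by simp [hd]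
    rw [hc', ← this]
    ring
  rw [hgoal]
  linarith
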